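/- Let v be a vertex of tenacity t < l_m and let b = base(v). Then every evenlevel(v) (resp. oddlevel(v)) path consists of an evenlevel(b) path concatenated with a minimum even (resp. odd) length alternating path from b to v starting with an unmatched edge. -/

import Mathlib

attribute [local instance] Classical.propDecidable

variable {V : Type*} [DecidableEq V]

namespace MV

open SimpleGraph

set_option linter.unusedSectionVars false
set_option linter.unusedVariables false
set_option linter.unnecessarySimpa false

/-- A walk is alternating (w.r.t. matching `M`) in the sense used for alternating paths
starting at an unmatched vertex: the `i`-th edge is matched iff `i` is odd. -/
def IsAlt (G : SimpleGraph V) (M : G.Subgraph) {a b : V} (w : G.Walk a b) : Prop :=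
  ∀ i (h : i < w.edges.length), (w.edges.get ⟨i, h⟩ ∈ M.edgeSet ↔ Odd i)

/-- length of a minimum even alternating path from an unmatched vertex to `v`. -/
noncomputable def evenlevel (G : SimpleGraph V) (M : G.Subgraph) (v : V) : ℕ∞ :=
  sInf {n : ℕ∞ | ∃ (f : V) (w : G.Walk f v),
    f ∉ M.verts ∧ w.IsPath ∧ IsAlt G M w ∧ Even w.length ∧ n = (w.length : ℕ∞)}

/-- length of a minimum odd alternating path from an unmatched vertex to `v`. -/
noncomputable def oddlevel (G : SimpleGraph V) (M : G.Subgraph) (v : V) : ℕ∞ :=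
  sInf {n : ℕ∞ | ∃ (f : V) (w : G.Walk f v),
    f ∉ M.verts ∧ w.IsPath ∧ IsAlt G M w ∧ Odd w.length ∧ n = (w.length : ℕ∞)}

noncomputable def tenacity (G : SimpleGraph V) (M : G.Subgraph) (v : V) : ℕ∞ :=
  evenlevel G M v + oddlevel G M v

noncomputable def minlevel (G : SimpleGraph V) (M : G.Subgraph) (v : V) : ℕ∞ :=
  min (evenlevel G M v) (oddlevel G M v)

noncomputable def maxlevel (G : SimpleGraph V) (M : G.Subgraph) (v : V) : ℕ∞ :=
  max (evenlevel G M v) (oddlevel G M v)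

/-- the length of a minimum length augmenting path w.r.t. `M` (`⊤` if none exists). -/
noncomputable def lm (G : SimpleGraph V) (M : G.Subgraph) : ℕ∞ :=
  sInf {n : ℕ∞ | ∃ (f g : V) (w : G.Walk f g), f ∉ M.verts ∧ g ∉ M.verts ∧ f ≠ g ∧
    w.IsPath ∧ IsAlt G M w ∧ Odd w.length ∧ n = (w.length : ℕ∞)}

/-- `w` is a minimum even- or odd-length alternating path from an unmatched vertex to `v`
  (an `evenlevel(v)` or `oddlevel(v)` path). -/
def IsMinPathTo (G : SimpleGraph V) (M : G.Subgraph) (v f : V) (w : G.Walk f v) : Prop :=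
  f ∉ M.verts ∧ w.IsPath ∧ IsAlt G M w ∧
    ((Even w.length ∧ (w.length : ℕ∞) = evenlevel G M v) ∨
     (Odd w.length ∧ (w.length : ℕ∞) = oddlevel G M v))

/-- `b` is the vertex of tenacity greater than `tenacity v` on `w` furthest from the start. -/
def IsFurthestHigh (G : SimpleGraph V) (M : G.Subgraph) (v : V) {f v' : V}
    (w : G.Walk f v') (b : V) : Prop :=
  ∃ hb : b ∈ w.support, tenacity G M v < tenacity G M b ∧
    ∀ u, ∀ hu : u ∈ w.support, tenacity G M v < tenacity G M u →
      (w.takeUntil u hu).length ≤ (w.takeUntil b hb).length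

/-- `b` is the base of `v`: the furthest higher-tenacity vertex on every minimum
even or odd alternating path to `v`. -/
def IsBase (G : SimpleGraph V) (M : G.Subgraph) (v b : V) : Prop :=
  ∀ (f : V) (w : G.Walk f v), IsMinPathTo G M v f w → IsFurthestHigh G M v w b

/-- minimum even length alternating path from `b` to `v` starting with an unmatched edge
  (`evenlevel(b; v)`). -/
noncomputable def evenlevelFrom (G : SimpleGraph V) (M : G.Subgraph) (b v : V) : ℕ∞ :=
  sInf {n : ℕ∞ | ∃ w : G.Walk b v,
    w.IsPath ∧ IsAlt G M w ∧ Even w.length ∧ n = (w.length : ℕ∞)}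

/-- minimum odd length alternating path from `b` to `v` starting with an unmatched edge
  (`oddlevel(b; v)`). -/
noncomputable def oddlevelFrom (G : SimpleGraph V) (M : G.Subgraph) (b v : V) : ℕ∞ :=
  sInf {n : ℕ∞ | ∃ w : G.Walk b v,
    w.IsPath ∧ IsAlt G M w ∧ Odd w.length ∧ n = (w.length : ℕ∞)}

def Outer (G : SimpleGraph V) (M : G.Subgraph) (v : V) : Prop :=
  evenlevel G M v < oddlevel G M v

/-- The blossom `B_{b,t}`, defined recursively, relative to a base function `bse`. -/
noncomputable def blossom (G : SimpleGraph V) (M : G.Subgraph) (bse : V → V) :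
    ℕ → V → Set V
  | 0, _ => ∅
  | 1, _ => ∅
  | (t + 2), b =>
      {v | tenacity G M v = ((t + 2 : ℕ) : ℕ∞) ∧ bse v = b} ∪
      ⋃ v ∈ {u | (u = b ∨ (tenacity G M u = ((t + 2 : ℕ) : ℕ∞) ∧ bse u = b)) ∧ Outer G M u},
        blossom G M bse t v

/-- The nesting depth `N(B_{b,t})`. -/
noncomputable def nestDepth (G : SimpleGraph V) (M : G.Subgraph) (bse : V → V) :
    ℕ → V → ℕ
  | 0, _ => 0
  | 1, _ => 0
  | (t + 2), b =>
      if {v | tenacity G M v = ((t + 2 : ℕ) : ℕ∞) ∧ bse v = b}.Nonempty then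
        1 + sSup ((fun v => nestDepth G M bse t v) ''
          {u | (u = b ∨ (tenacity G M u = ((t + 2 : ℕ) : ℕ∞) ∧ bse u = b)) ∧ Outer G M u})
      else nestDepth G M bse t b

/-- `bse` assigns to each vertex of tenacity `< l_m` its (unique) base. -/
def BaseFn (G : SimpleGraph V) (M : G.Subgraph) (bse : V → V) : Prop :=
  ∀ v, tenacity G M v < lm G M → IsBase G M v (bse v)

/-- `u` is a predecessor of `v`: `(u,v)` is the last edge of some `minlevel(v)` path. -/
def IsPred (G : SimpleGraph V) (M : G.Subgraph) (u v : V) : Prop :=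
  ∃ (f : V) (w : G.Walk f v), f ∉ M.verts ∧ w.IsPath ∧ IsAlt G M w ∧
    (w.length : ℕ∞) = minlevel G M v ∧
    0 < w.length ∧ w.getVert (w.length - 1) = u

/-- A bridge is an edge of `G` that is not a prop. -/
def IsBridge (G : SimpleGraph V) (M : G.Subgraph) (u v : V) : Prop :=
  G.Adj u v ∧ ¬ IsPred G M u v ∧ ¬ IsPred G M v u

/-- tenacity of an edge. -/
noncomputable def edgeTenacity (G : SimpleGraph V) (M : G.Subgraph) (u v : V) : ℕ∞ :=
  if s(u, v) ∈ M.edgeSet then oddlevel G M u + oddlevel G M v + 1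
  else evenlevel G M u + evenlevel G M v + 1

section WalkAux

variable {G : SimpleGraph V}

lemma eq_of_length_zero {a b : V} (w : G.Walk a b) (h : w.length = 0) : a = b := by
  cases w with
  | nil => rfl
  | cons h' p => simp at h

lemma length_zero_of_isPath_loop {a : V} (w : G.Walk a a) (h : w.IsPath) : w.length = 0 := by
  cases w with
  | nil => rfl
  | cons h' p =>
    exfalso
    have hs := h.support_nodup
    rw [Walk.support_cons] at hs
    exact (List.nodup_cons.mp hs).1 (by simpa using p.end_mem_support)

lemma takeUntil_congr {a c y : V} (w₁ w₂ : G.Walk a c) (h : w₁ = w₂) (h₁ : y ∈ w₁.support)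
    (h₂ : y ∈ w₂.support) : w₁.takeUntil y h₁ = w₂.takeUntil y h₂ := by
  subst h; rfl

lemma dropUntil_congr {a c y : V} (w₁ w₂ : G.Walk a c) (h : w₁ = w₂) (h₁ : y ∈ w₁.support)
    (h₂ : y ∈ w₂.support) : w₁.dropUntil y h₁ = w₂.dropUntil y h₂ := by
  subst h; rfl

lemma takeUntil_start {a c : V} (w : G.Walk a c) (h : a ∈ w.support) :
    w.takeUntil a h = Walk.nil := by
  cases w with
  | nil => rfl
  | cons h' p => simp [Walk.takeUntil]

lemma takeUntil_cons {a m c y : V} (hadj : G.Adj a m) (p : G.Walk m c) (hy : y ∈ p.support)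
    (hne : a ≠ y) (h : y ∈ (Walk.cons hadj p).support) :
    (Walk.cons hadj p).takeUntil y h = Walk.cons hadj (p.takeUntil y hy) := by
  simp [Walk.takeUntil, hne]

lemma length_split {a c y : V} (w : G.Walk a c) (h : y ∈ w.support) :
    (w.takeUntil y h).length + (w.dropUntil y h).length = w.length := by
  conv_rhs => rw [← w.take_spec h]
  rw [Walk.length_append]

lemma length_takeUntil_eq_zero_iff {a c y : V} (w : G.Walk a c) (h : y ∈ w.support) :
    (w.takeUntil y h).length = 0 ↔ y = a :=
  ⟨fun h0 => (eq_of_length_zero _ h0).symm, fun hy => by subst hy; simp [takeUntil_start]⟩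

lemma takeUntil_append_left {a c d y : V} (A : G.Walk a c) (B : G.Walk c d)
    (hy : y ∈ A.support) (h : y ∈ (A.append B).support) :
    (A.append B).takeUntil y h = A.takeUntil y hy := by
  induction A with
  | nil =>
    obtain rfl := Walk.mem_support_nil_iff.mp hy
    simp [takeUntil_start]
  | cons hadj p ih =>
    rename_i u m c'
    by_cases hu : u = y
    · subst hu
      rw [takeUntil_start, takeUntil_start]
    · have hyp : y ∈ p.support := by
        cases (by simpa using hy : y = u ∨ y ∈ p.support) with
        | inl h' => exact absurd h'.symm hu
        | inr h' => exact h'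
      have e1 : ((Walk.cons hadj p).append B) = Walk.cons hadj (p.append B) := by
        simp [Walk.cons_append]
      rw [takeUntil_congr _ _ e1 h (by rw [← e1]; exact h)]
      rw [takeUntil_cons hadj (p.append B) (by rw [Walk.mem_support_append_iff]; exact Or.inl hyp)
        (fun he => hu he) _]
      rw [takeUntil_cons hadj p hyp (fun he => hu he) hy]
      rw [ih B hyp _]

lemma takeUntil_append_right {a c d y : V} (A : G.Walk a c) (B : G.Walk c d)
    (hyA : y ∉ A.support) (hyB : y ∈ B.support) (h : y ∈ (A.append B).support) :
    (A.append B).takeUntil y h = A.append (B.takeUntil y hyB) := by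
  induction A with
  | nil => simp
  | cons hadj p ih =>
    rename_i u m c'
    have hu : u ≠ y := fun he => hyA (by simp [he])
    have hyp : y ∉ p.support := fun hc => hyA (by simp [hc])
    have e1 : ((Walk.cons hadj p).append B) = Walk.cons hadj (p.append B) := by
      simp [Walk.cons_append]
    rw [takeUntil_congr _ _ e1 h (by rw [← e1]; exact h)]
    rw [takeUntil_cons hadj (p.append B)
      (by rw [Walk.mem_support_append_iff]; exact Or.inr hyB) hu _]
    rw [ih B hyp _]
    rfl

/-- vertices of the two halves of a simple walk meet only at the split point. -/
lemma meet_of_isPath {a c y b : V} (w : G.Walk a c) (hw : w.IsPath) (hb : b ∈ w.support)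
    (h1 : y ∈ (w.takeUntil b hb).support) (h2 : y ∈ (w.dropUntil b hb).support) : y = b := by
  by_contra hne
  have hsup : w.support = (w.takeUntil b hb).support ++ (w.dropUntil b hb).support.tail := by
    conv_lhs => rw [← w.take_spec hb]
    exact Walk.support_append _ _
  have hnd := hw.support_nodup
  rw [hsup] at hnd
  have hdisj := List.disjoint_of_nodup_append hnd
  have h2' : y ∈ (w.dropUntil b hb).support.tail := by
    have := (w.dropUntil b hb).support_eq_cons
    rw [this] at h2
    cases h2 with
    | head => exact absurd rfl hne
    | tail _ h => exact h
  exact hdisj h1 h2'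

/-- appending two paths that meet only at the junction gives a path. -/
lemma isPath_append {a x c : V} (A : G.Walk a x) (B : G.Walk x c) (hA : A.IsPath)
    (hB : B.IsPath) (hmeet : ∀ y, y ∈ A.support → y ∈ B.support → y = x) :
    (A.append B).IsPath := by
  rw [Walk.isPath_def, Walk.support_append]
  apply List.Nodup.append hA.support_nodup
  · have := hB.support_nodup
    rw [B.support_eq_cons] at this
    exact (List.nodup_cons.mp this).2
  · intro y hyA hyB
    have hyB' : y ∈ B.support := by
      rw [B.support_eq_cons]; exact List.mem_cons_of_mem _ hyB
    have := hmeet y hyA hyB'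
    subst this
    have := hB.support_nodup
    rw [B.support_eq_cons] at this
    exact (List.nodup_cons.mp this).1 hyB

/-- position of a vertex along a walk (length of the prefix up to its first occurrence). -/
noncomputable def pos {a c : V} (w : G.Walk a c) (y : V) : ℕ :=
  if h : y ∈ w.support then (w.takeUntil y h).length else 0

lemma pos_eq {a c y : V} (w : G.Walk a c) (h : y ∈ w.support) :
    pos w y = (w.takeUntil y h).length := by
  simp [pos, h]

lemma pos_start {a c : V} (w : G.Walk a c) : pos w a = 0 := by
  rw [pos_eq w w.start_mem_support, takeUntil_start]
  rfl

lemma pos_le {a c y : V} (w : G.Walk a c) (h : y ∈ w.support) : pos w y ≤ w.length := by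
  rw [pos_eq w h]; exact w.length_takeUntil_le h

lemma pos_end {a c : V} (w : G.Walk a c) (hw : w.IsPath) : pos w c = w.length := by
  rw [pos_eq w w.end_mem_support]
  have := length_split w w.end_mem_support
  have h0 : (w.dropUntil c w.end_mem_support).length = 0 :=
    length_zero_of_isPath_loop _ (hw.dropUntil _)
  omega

/-- a member of the prefix has `pos` computed within the prefix. -/
lemma pos_takeUntil {a c y x : V} (w : G.Walk a c) (hx : x ∈ w.support)
    (hy : y ∈ (w.takeUntil x hx).support) : pos w y = pos (w.takeUntil x hx) y := by
  have hyw : y ∈ w.support := w.support_takeUntil_subset hx hy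
  rw [pos_eq w hyw, pos_eq _ hy]
  have h' : y ∈ ((w.takeUntil x hx).append (w.dropUntil x hx)).support := by
    rw [w.take_spec hx]; exact hyw
  have e2 : w.takeUntil y hyw = ((w.takeUntil x hx).append (w.dropUntil x hx)).takeUntil y h' :=
    (takeUntil_congr _ _ (w.take_spec hx) h' hyw).symm
  rw [e2, takeUntil_append_left _ _ hy h']

lemma mem_takeUntil_of_pos_le {a c y x : V} (w : G.Walk a c) (hw : w.IsPath)
    (hx : x ∈ w.support) (hy : y ∈ w.support) (hle : pos w y ≤ pos w x) :
    y ∈ (w.takeUntil x hx).support := by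
  by_contra hyn
  -- then y is in the dropUntil part, strictly after x
  have hyd : y ∈ (w.dropUntil x hx).support := by
    have := hy
    rw [← w.take_spec hx, Walk.mem_support_append_iff] at this
    cases this with
    | inl h => exact absurd h hyn
    | inr h => exact h
  have hyx : y ≠ x := fun he =>
    hyn (by rw [he]; exact (w.takeUntil x hx).end_mem_support)
  have htu : w.takeUntil y hy =
      (w.takeUntil x hx).append ((w.dropUntil x hx).takeUntil y hyd) := by
    have := takeUntil_append_right (w.takeUntil x hx) (w.dropUntil x hx) hyn hyd
      (by rw [w.take_spec hx]; exact hy)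
    rw [← this]
    exact takeUntil_congr _ _ (w.take_spec hx).symm hy _
  have hpy : pos w y = pos w x + ((w.dropUntil x hx).takeUntil y hyd).length := by
    rw [pos_eq w hy, htu, Walk.length_append, pos_eq w hx]
  have hpos : 0 < ((w.dropUntil x hx).takeUntil y hyd).length := by
    rcases Nat.eq_zero_or_pos ((w.dropUntil x hx).takeUntil y hyd).length with h0 | h
    · exact absurd ((length_takeUntil_eq_zero_iff _ _).mp h0) hyx
    · exact h
  omega

lemma pos_lt_of_mem_dropUntil {a c y x : V} (w : G.Walk a c) (hw : w.IsPath)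
    (hx : x ∈ w.support) (hyd : y ∈ (w.dropUntil x hx).support) (hyx : y ≠ x) :
    pos w x < pos w y := by
  have hyn : y ∉ (w.takeUntil x hx).support := fun hc => hyx (meet_of_isPath w hw hx hc hyd)
  have hy : y ∈ w.support := w.support_dropUntil_subset hx hyd
  by_contra hle
  exact hyn (mem_takeUntil_of_pos_le w hw hx hy (by omega))

lemma mem_dropUntil_of_pos_ge {a c y x : V} (w : G.Walk a c) (hw : w.IsPath)
    (hx : x ∈ w.support) (hy : y ∈ w.support) (hle : pos w x ≤ pos w y) :
    y ∈ (w.dropUntil x hx).support := by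
  by_cases hyx : y = x
  · subst hyx; exact Walk.start_mem_support _
  · by_contra hyn
    have hyt : y ∈ (w.takeUntil x hx).support := by
      have := hy
      rw [← w.take_spec hx, Walk.mem_support_append_iff] at this
      cases this with
      | inl h => exact h
      | inr h => exact absurd h hyn
    -- then pos w y < pos w x
    have h1 : pos w y = pos (w.takeUntil x hx) y := pos_takeUntil w hx hyt
    have h2 : pos (w.takeUntil x hx) y ≤ (w.takeUntil x hx).length := pos_le _ hyt
    have h3 : pos w x = (w.takeUntil x hx).length := pos_eq w hx
    -- y ≠ x and y in prefix with pos ≤ len; need strict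
    have h4 : pos (w.takeUntil x hx) y ≠ (w.takeUntil x hx).length := by
      intro he
      have hpx : pos (w.takeUntil x hx) x = (w.takeUntil x hx).length :=
        pos_end _ (hw.takeUntil hx)
      -- pos injectivity within the prefix via mem_takeUntil_of_pos_le... direct:
      -- takeUntil y of prefix has full length, so its dropUntil has length 0
      have hyt2 : y ∈ (w.takeUntil x hx).support := hyt
      have := length_split (w.takeUntil x hx) hyt2
      rw [pos_eq _ hyt2] at he
      have hd0 : ((w.takeUntil x hx).dropUntil y hyt2).length = 0 := by omega
      exact hyx (eq_of_length_zero _ hd0)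
    omega

lemma pos_inj {a c : V} (w : G.Walk a c) (hw : w.IsPath) {x y : V} (hx : x ∈ w.support)
    (hy : y ∈ w.support) (h : pos w x = pos w y) : x = y := by
  have h1 : y ∈ (w.dropUntil x hx).support := mem_dropUntil_of_pos_ge w hw hx hy (by omega)
  by_cases hyx : y = x
  · exact hyx.symm
  · exact absurd (pos_lt_of_mem_dropUntil w hw hx h1 hyx) (by omega)

/-- first vertex along `r` that belongs to `S`. -/
lemma exists_first_mem {f' c : V} (r : G.Walk f' c) (S : List V) (hc : c ∈ S) :
    ∃ (x : V) (hx : x ∈ r.support), x ∈ S ∧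
      ∀ y, y ∈ (r.takeUntil x hx).support → y ∈ S → y = x := by
  induction r with
  | nil =>
    refine ⟨_, Walk.start_mem_support _, hc, ?_⟩
    intro y hy _
    rw [takeUntil_start] at hy
    simpa using hy
  | cons hadj p ih =>
    rename_i u m c'
    by_cases hu : u ∈ S
    · refine ⟨u, Walk.start_mem_support _, hu, ?_⟩
      intro y hy _
      rw [takeUntil_start] at hy
      simpa using hy
    · obtain ⟨x, hx, hxS, hfirst⟩ := ih hc
      have hux : u ≠ x := fun he => hu (he ▸ hxS)
      have hx' : x ∈ (Walk.cons hadj p).support := by simp [hx]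
      refine ⟨x, hx', hxS, ?_⟩
      intro y hy hyS
      rw [takeUntil_cons hadj p hx hux hx'] at hy
      rw [Walk.support_cons] at hy
      cases hy with
      | head => exact absurd hyS hu
      | tail _ h => exact hfirst y h hyS

end WalkAux

section AltOff

lemma list_getElem_idx_congr {α : Type*} {l : List α} {i j : ℕ} (hij : i = j) (hi : i < l.length) :
    l[i]'hi = l[j]'(hij ▸ hi) := by subst hij; rfl

lemma list_get_append_left {α : Type*} {i : ℕ} (as bs : List α) (h : i < as.length)
    {h' : i < (as ++ bs).length} : (as ++ bs).get ⟨i, h'⟩ = as.get ⟨i, h⟩ := by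
  simp only [List.get_eq_getElem]; exact List.getElem_append_left h

lemma list_get_append_right {α : Type*} {i : ℕ} (as bs : List α) (h : as.length ≤ i)
    {h' : i < (as ++ bs).length} {h'' : i - as.length < bs.length} :
    (as ++ bs).get ⟨i, h'⟩ = bs.get ⟨i - as.length, h''⟩ := by
  simp only [List.get_eq_getElem]; exact List.getElem_append_right h

lemma list_get_idx_congr {α : Type*} {l : List α} {i j : ℕ} (hij : i = j) (hi : i < l.length)
    (hj : j < l.length) : l.get ⟨i, hi⟩ = l.get ⟨j, hj⟩ := by subst hij; rfl

lemma list_get_congr {α : Type*} {l₁ l₂ : List α} (h : l₁ = l₂) {i : ℕ} (h₁ : i < l₁.length)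
    (h₂ : i < l₂.length) : l₁.get ⟨i, h₁⟩ = l₂.get ⟨i, h₂⟩ := by subst h; rfl

variable {G : SimpleGraph V} {M : G.Subgraph}

/-- alternation with an offset: edge `i` is matched iff `off + i` is odd. -/
def AltOff (M : G.Subgraph) {a b : V} (w : G.Walk a b) (off : ℕ) : Prop :=
  ∀ i (h : i < w.edges.length), (w.edges.get ⟨i, h⟩ ∈ M.edgeSet ↔ Odd (off + i))

lemma isAlt_iff_altOff {a b : V} (w : G.Walk a b) : IsAlt G M w ↔ AltOff M w 0 := by
  unfold IsAlt AltOff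
  constructor <;> intro h i hi <;> simpa [Nat.zero_add] using h i hi

lemma AltOff.congr_parity {a b : V} {w : G.Walk a b} {off off' : ℕ}
    (h : AltOff M w off) (hpar : off % 2 = off' % 2) : AltOff M w off' := by
  intro i hi
  rw [h i hi, Nat.odd_iff, Nat.odd_iff]
  omega

lemma AltOff.append {a b c : V} {A : G.Walk a b} {B : G.Walk b c} {off : ℕ}
    (hA : AltOff M A off) (hB : AltOff M B (off + A.length)) :
    AltOff M (A.append B) off := by
  intro i hi
  have e : (A.append B).edges = A.edges ++ B.edges := Walk.edges_append A B
  have hi2 : i < (A.edges ++ B.edges).length := by rw [← e]; exact hi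
  rw [list_get_congr e hi hi2]
  by_cases hlt : i < A.edges.length
  · rw [list_get_append_left _ _ hlt]
    exact hA i hlt
  · push_neg at hlt
    have hlen : i - A.edges.length < B.edges.length := by
      rw [List.length_append] at hi2; omega
    rw [list_get_append_right _ _ hlt (h'' := hlen)]
    rw [hB _ hlen, Nat.odd_iff, Nat.odd_iff]
    have hEA : A.edges.length = A.length := Walk.length_edges A
    omega

lemma AltOff.of_append_left {a b c : V} {A : G.Walk a b} {B : G.Walk b c} {off : ℕ}
    (h : AltOff M (A.append B) off) : AltOff M A off := by
  intro i hi
  have e : (A.append B).edges = A.edges ++ B.edges := Walk.edges_append A B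
  have hi' : i < (A.append B).edges.length := by
    rw [e, List.length_append]; omega
  have hi2 : i < (A.edges ++ B.edges).length := by rw [← e]; exact hi'
  have := h i hi'
  rw [list_get_congr e hi' hi2, list_get_append_left _ _ hi] at this
  exact this

lemma AltOff.of_append_right {a b c : V} {A : G.Walk a b} {B : G.Walk b c} {off : ℕ}
    (h : AltOff M (A.append B) off) : AltOff M B (off + A.length) := by
  intro i hi
  have e : (A.append B).edges = A.edges ++ B.edges := Walk.edges_append A B
  have hi' : A.edges.length + i < (A.append B).edges.length := by
    rw [e, List.length_append]; omega
  have hi2 : A.edges.length + i < (A.edges ++ B.edges).length := by rw [← e]; exact hi'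
  have := h (A.edges.length + i) hi'
  rw [list_get_congr e hi' hi2,
    list_get_append_right _ _ (by omega) (h'' := by simpa using hi)] at this
  simp only [Nat.add_sub_cancel_left] at this
  rw [this, Nat.odd_iff, Nat.odd_iff]
  have hEA : A.edges.length = A.length := Walk.length_edges A
  omega

lemma AltOff.takeUntil {a b y : V} {w : G.Walk a b} {off : ℕ} (h : AltOff M w off)
    (hy : y ∈ w.support) : AltOff M (w.takeUntil y hy) off := by
  have := h
  rw [← w.take_spec hy] at this
  exact this.of_append_left

lemma AltOff.dropUntil {a b y : V} {w : G.Walk a b} {off : ℕ} (h : AltOff M w off)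
    (hy : y ∈ w.support) :
    AltOff M (w.dropUntil y hy) (off + (w.takeUntil y hy).length) := by
  have := h
  rw [← w.take_spec hy] at this
  exact this.of_append_right

lemma AltOff.reverse {a b : V} {w : G.Walk a b} {off off' : ℕ} (h : AltOff M w off)
    (hpar : off' % 2 = (off + w.length + 1) % 2) : AltOff M w.reverse off' := by
  intro i hi
  have e : w.reverse.edges = w.edges.reverse := Walk.edges_reverse w
  have hi2 : i < w.edges.reverse.length := by rw [← e]; exact hi
  have hilt : i < w.edges.length := by simpa using hi2
  have hi' : w.edges.length - 1 - i < w.edges.length := by omega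
  have hget : w.reverse.edges.get ⟨i, hi⟩ = w.edges.get ⟨w.edges.length - 1 - i, hi'⟩ := by
    rw [list_get_congr e hi hi2]
    rw [List.get_eq_getElem, List.get_eq_getElem]
    exact List.getElem_reverse _
  rw [hget, h _ hi', Nat.odd_iff, Nat.odd_iff]
  have hE : w.edges.length = w.length := Walk.length_edges w
  omega

end AltOff

section EdgeStruct

variable {G : SimpleGraph V}

lemma exists_cons_of_pos {a c : V} (w : G.Walk a c) (h : 0 < w.length) :
    ∃ (y : V) (hadj : G.Adj a y) (w' : G.Walk y c), w = Walk.cons hadj w' := by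
  cases w with
  | nil => simp at h
  | cons hadj w' => exact ⟨_, hadj, w', rfl⟩

lemma edges_get_zero_cons {a y c : V} (hadj : G.Adj a y) (w' : G.Walk y c)
    (h : 0 < (Walk.cons hadj w').edges.length) :
    (Walk.cons hadj w').edges.get ⟨0, h⟩ = s(a, y) := rfl

lemma exists_last_edge {a c : V} (w : G.Walk a c) (hpos : 0 < w.length) :
    ∃ (z : V), z ∈ w.support ∧ z ≠ c ∧ G.Adj z c ∧
      ∀ h : w.length - 1 < w.edges.length, w.edges.get ⟨w.length - 1, h⟩ = s(z, c) := by
  have hrpos : 0 < w.reverse.length := by rwa [Walk.length_reverse]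
  obtain ⟨y, hadj, w'', hrev⟩ := exists_cons_of_pos w.reverse hrpos
  refine ⟨y, ?_, fun he => (G.irrefl (he ▸ hadj)), hadj.symm, ?_⟩
  · have hy : y ∈ w.reverse.support := by rw [hrev]; simp
    rwa [Walk.support_reverse, List.mem_reverse] at hy
  · intro h
    have e : w.reverse.edges = w.edges.reverse := Walk.edges_reverse w
    have h0 : 0 < w.reverse.edges.length := by
      rw [Walk.length_edges, Walk.length_reverse]; exact hpos
    have h0' : 0 < w.edges.reverse.length := by rw [← e]; exact h0
    have hgr : w.reverse.edges.get ⟨0, h0⟩ = s(c, y) := by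
      have : w.reverse.edges.get ⟨0, h0⟩ =
          (Walk.cons hadj w'').edges.get ⟨0, by rw [← hrev]; exact h0⟩ :=
        list_get_congr (by rw [hrev]) h0 _
      rw [this, edges_get_zero_cons]
    have hgr2 : w.reverse.edges.get ⟨0, h0⟩ = w.edges.get ⟨w.length - 1, h⟩ := by
      rw [list_get_congr e h0 h0']
      rw [List.get_eq_getElem, List.get_eq_getElem]
      have h2 := List.getElem_reverse (l := w.edges) (i := 0) (by simpa using h0')
      rw [h2]
      have hidx : w.edges.length - 1 - 0 = w.length - 1 := by
        have := Walk.length_edges w; omega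
      exact list_getElem_idx_congr hidx _
    rw [← hgr2, hgr, Sym2.eq_swap]

end EdgeStruct

section Levels

variable {G : SimpleGraph V} {M : G.Subgraph}

lemma enat_sInf_mem {S : Set ℕ∞} (hne : S.Nonempty) : sInf S ∈ S := by
  obtain ⟨m, hm, hmin⟩ := IsWellFounded.wf.has_min (r := ((· < ·) : ℕ∞ → ℕ∞ → Prop)) S hne
  have : sInf S = m := le_antisymm (sInf_le hm) (le_sInf fun x hx => not_lt.1 (hmin x hx))
  rw [this]; exact hm

lemma evenlevel_le {v f : V} (w : G.Walk f v) (hf : f ∉ M.verts) (hp : w.IsPath)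
    (halt : AltOff M w 0) (hev : Even w.length) : evenlevel G M v ≤ (w.length : ℕ∞) :=
  sInf_le ⟨f, w, hf, hp, (isAlt_iff_altOff w).mpr halt, hev, rfl⟩

lemma oddlevel_le {v f : V} (w : G.Walk f v) (hf : f ∉ M.verts) (hp : w.IsPath)
    (halt : AltOff M w 0) (hod : Odd w.length) : oddlevel G M v ≤ (w.length : ℕ∞) :=
  sInf_le ⟨f, w, hf, hp, (isAlt_iff_altOff w).mpr halt, hod, rfl⟩

lemma evenlevelFrom_le {b v : V} (w : G.Walk b v) (hp : w.IsPath)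
    (halt : AltOff M w 0) (hev : Even w.length) : evenlevelFrom G M b v ≤ (w.length : ℕ∞) :=
  sInf_le ⟨w, hp, (isAlt_iff_altOff w).mpr halt, hev, rfl⟩

lemma oddlevelFrom_le {b v : V} (w : G.Walk b v) (hp : w.IsPath)
    (halt : AltOff M w 0) (hod : Odd w.length) : oddlevelFrom G M b v ≤ (w.length : ℕ∞) :=
  sInf_le ⟨w, hp, (isAlt_iff_altOff w).mpr halt, hod, rfl⟩

lemma lm_le {f g : V} (w : G.Walk f g) (hf : f ∉ M.verts) (hg : g ∉ M.verts) (hfg : f ≠ g)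
    (hp : w.IsPath) (halt : AltOff M w 0) (hod : Odd w.length) : lm G M ≤ (w.length : ℕ∞) :=
  sInf_le ⟨f, g, w, hf, hg, hfg, hp, (isAlt_iff_altOff w).mpr halt, hod, rfl⟩

lemma evenlevel_witness {v : V} {n : ℕ} (h : evenlevel G M v = (n : ℕ∞)) :
    ∃ (f : V) (w : G.Walk f v), f ∉ M.verts ∧ w.IsPath ∧ AltOff M w 0 ∧ Even w.length ∧
      w.length = n := by
  have hne : {n : ℕ∞ | ∃ (f : V) (w : G.Walk f v),
      f ∉ M.verts ∧ w.IsPath ∧ IsAlt G M w ∧ Even w.length ∧ n = (w.length : ℕ∞)}.Nonempty := by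
    by_contra hc
    rw [Set.not_nonempty_iff_eq_empty] at hc
    rw [evenlevel, hc, sInf_empty] at h
    exact (ENat.top_ne_coe n) h
  obtain ⟨f, w, h1, h2, h3, h4, h5⟩ := enat_sInf_mem hne
  rw [← evenlevel, h] at h5
  exact ⟨f, w, h1, h2, (isAlt_iff_altOff w).mp h3, h4, (by exact_mod_cast h5.symm)⟩

lemma oddlevel_witness {v : V} {n : ℕ} (h : oddlevel G M v = (n : ℕ∞)) :
    ∃ (f : V) (w : G.Walk f v), f ∉ M.verts ∧ w.IsPath ∧ AltOff M w 0 ∧ Odd w.length ∧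
      w.length = n := by
  have hne : {n : ℕ∞ | ∃ (f : V) (w : G.Walk f v),
      f ∉ M.verts ∧ w.IsPath ∧ IsAlt G M w ∧ Odd w.length ∧ n = (w.length : ℕ∞)}.Nonempty := by
    by_contra hc
    rw [Set.not_nonempty_iff_eq_empty] at hc
    rw [oddlevel, hc, sInf_empty] at h
    exact (ENat.top_ne_coe n) h
  obtain ⟨f, w, h1, h2, h3, h4, h5⟩ := enat_sInf_mem hne
  rw [← oddlevel, h] at h5
  exact ⟨f, w, h1, h2, (isAlt_iff_altOff w).mp h3, h4, (by exact_mod_cast h5.symm)⟩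

end Levels

section Splice

variable {G : SimpleGraph V} {M : G.Subgraph}

lemma mem_support_of_mem_reverse {a c y : V} {w : G.Walk a c} (h : y ∈ w.reverse.support) :
    y ∈ w.support := by
  rwa [Walk.support_reverse, List.mem_reverse] at h

/-- The splice lemma: given an alternating path `u` through `b` and an alternating path `r`
ending inside the part of `u` after `b`, one can splice `r` with a piece of `u` at the first
meeting point `x`, producing (depending on parity) either an alternating path to the end of
`u` or an alternating path to `b`. -/
lemma splice {f v b f' c : V} (u : G.Walk f v) (hu : u.IsPath) (hualt : AltOff M u 0)
    (hb : b ∈ u.support) (r : G.Walk f' c) (hr : r.IsPath) (hralt : AltOff M r 0)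
    (hc : c ∈ (u.dropUntil b hb).support) :
    ∃ (x : V) (hxq : x ∈ (u.dropUntil b hb).support) (hxr : x ∈ r.support),
      (Even ((r.takeUntil x hxr).length + (u.takeUntil b hb).length +
          ((u.dropUntil b hb).takeUntil x hxq).length) →
        ∃ W : G.Walk f' v, W.IsPath ∧ AltOff M W 0 ∧
          W.length + (u.takeUntil b hb).length + ((u.dropUntil b hb).takeUntil x hxq).length
            = (r.takeUntil x hxr).length + u.length) ∧
      (Odd ((r.takeUntil x hxr).length + (u.takeUntil b hb).length +
          ((u.dropUntil b hb).takeUntil x hxq).length) →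
        ∃ W : G.Walk f' b, W.IsPath ∧ AltOff M W 0 ∧
          W.length = (r.takeUntil x hxr).length + ((u.dropUntil b hb).takeUntil x hxq).length) := by
  set Q := u.dropUntil b hb with hQdef
  set ℓ := (u.takeUntil b hb).length with hldef
  have hQpath : Q.IsPath := hu.dropUntil hb
  have hQalt : AltOff M Q ℓ := by
    have := hualt.dropUntil hb
    rwa [Nat.zero_add] at this
  obtain ⟨x, hxr, hxQ, hfirst⟩ := exists_first_mem r Q.support hc
  set r1 := r.takeUntil x hxr with hr1def
  have hr1path : r1.IsPath := hr.takeUntil hxr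
  have hr1alt : AltOff M r1 0 := hralt.takeUntil hxr
  set a := r1.length with hadef
  set d := (Q.takeUntil x hxQ).length with hddef
  refine ⟨x, hxQ, hxr, ?_, ?_⟩
  · -- even case: forward splice
    intro hev
    have e1 : (r.takeUntil x hxr).length = a := rfl
    have e2 : ((u.dropUntil b hb).takeUntil x hxQ).length = d := rfl
    have e3 : (u.takeUntil b hb).length = ℓ := rfl
    have hpar : (ℓ + d) % 2 = (0 + a) % 2 := by
      rw [Nat.even_iff] at hev; omega
    have hWalt : AltOff M (r1.append (Q.dropUntil x hxQ)) 0 := by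
      refine AltOff.append hr1alt ?_
      exact (hQalt.dropUntil hxQ).congr_parity hpar
    have hWpath : (r1.append (Q.dropUntil x hxQ)).IsPath := by
      refine isPath_append _ _ hr1path (hQpath.dropUntil hxQ) ?_
      intro y hy1 hy2
      exact hfirst y hy1 (Q.support_dropUntil_subset hxQ hy2)
    refine ⟨_, hWpath, hWalt, ?_⟩
    have h1 := length_split Q hxQ
    have h2 := length_split u hb
    have e4 : (u.dropUntil b hb).length = Q.length := rfl
    rw [Walk.length_append]
    omega
  · -- odd case: backward splice
    intro hod
    have e1 : (r.takeUntil x hxr).length = a := rfl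
    have e2 : ((u.dropUntil b hb).takeUntil x hxQ).length = d := rfl
    have e3 : (u.takeUntil b hb).length = ℓ := rfl
    have hpar : a % 2 = (ℓ + d + 1) % 2 := by
      rw [Nat.odd_iff] at hod; omega
    have hrev : AltOff M (Q.takeUntil x hxQ).reverse (0 + a) := by
      refine (hQalt.takeUntil hxQ).reverse ?_
      rw [Nat.zero_add]
      exact hpar
    have hWalt : AltOff M (r1.append (Q.takeUntil x hxQ).reverse) 0 :=
      AltOff.append hr1alt hrev
    have hWpath : (r1.append (Q.takeUntil x hxQ).reverse).IsPath := by
      refine isPath_append _ _ hr1path ((hQpath.takeUntil hxQ).reverse) ?_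
      intro y hy1 hy2
      exact hfirst y hy1 (Q.support_takeUntil_subset hxQ (mem_support_of_mem_reverse hy2))
    refine ⟨_, hWpath, hWalt, ?_⟩
    rw [Walk.length_append, Walk.length_reverse]

end Splice

section Grid

variable {G : SimpleGraph V} {M : G.Subgraph}

/-- The grid-splice lemma: given an even alternating path `p` from `f` to `b` and an
alternating path `s` from `b` to `v` (disjointness not assumed), there is a common vertex
`x` at which a simple splice is possible: either a forward splice giving an alternating
path from `f` to `v`, or a backward splice giving an alternating path from `f` to `b`. -/
lemma grid {f b v : V} (p : G.Walk f b) (hp : p.IsPath) (hpalt : AltOff M p 0)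
    (hΛ : Even p.length) (s : G.Walk b v) (hs : s.IsPath) (hsalt : AltOff M s 0)
    (hvp : v ∉ p.support) :
    ∃ x, x ∈ p.support ∧ x ∈ s.support ∧
      ((Even (pos p x + pos s x) ∧
        ∃ W : G.Walk f v, W.IsPath ∧ AltOff M W 0 ∧
          W.length + pos s x = pos p x + s.length) ∨
      (Odd (pos p x + pos s x) ∧
        ∃ W : G.Walk f b, W.IsPath ∧ AltOff M W 0 ∧
          W.length = pos p x + pos s x ∧ pos p x < p.length ∧ pos s x < s.length)) := by
  classical
  by_contra hcon
  push_neg at hcon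
  set CF : Finset V := p.support.toFinset ∩ s.support.toFinset with hCF
  have hmemCF : ∀ x, x ∈ CF ↔ x ∈ p.support ∧ x ∈ s.support := by
    intro x
    simp [hCF, List.mem_toFinset]
  have hbCF : b ∈ CF := (hmemCF b).mpr ⟨p.end_mem_support, s.start_mem_support⟩
  -- condition (a): every aligned common vertex has a nonempty "forward region"
  have hfor : ∀ x, x ∈ CF → Even (pos p x + pos s x) →
      ∃ y, y ∈ CF ∧ y ≠ x ∧ pos p y ≤ pos p x ∧ pos s x ≤ pos s y := by
    intro x hx hev
    by_contra hreg
    push_neg at hreg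
    obtain ⟨hxp, hxs⟩ := (hmemCF x).mp hx
    -- forward splice is simple, contradiction with hcon
    have hmeet : ∀ y, y ∈ (p.takeUntil x hxp).support → y ∈ (s.dropUntil x hxs).support →
        y = x := by
      intro y hy1 hy2
      have hyp : y ∈ p.support := p.support_takeUntil_subset hxp hy1
      have hys : y ∈ s.support := s.support_dropUntil_subset hxs hy2
      by_contra hne
      have h1 : pos p y ≤ pos p x := by
        rw [pos_takeUntil p hxp hy1]
        calc pos (p.takeUntil x hxp) y ≤ (p.takeUntil x hxp).length := pos_le _ hy1
        _ = pos p x := (pos_eq p hxp).symm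
      have h2 : pos s x < pos s y := pos_lt_of_mem_dropUntil s hs hxs hy2 hne
      have := hreg y ((hmemCF y).mpr ⟨hyp, hys⟩) hne h1
      omega
    have hWpath : ((p.takeUntil x hxp).append (s.dropUntil x hxs)).IsPath :=
      isPath_append _ _ (hp.takeUntil hxp) (hs.dropUntil hxs) hmeet
    have hWalt : AltOff M ((p.takeUntil x hxp).append (s.dropUntil x hxs)) 0 := by
      refine AltOff.append (hpalt.takeUntil hxp) ?_
      have hd := hsalt.dropUntil hxs
      refine hd.congr_parity ?_
      rw [Nat.even_iff] at hev
      rw [pos_eq p hxp, pos_eq s hxs] at hev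
      omega
    refine (hcon x hxp hxs).1 hev _ hWpath hWalt ?_
    rw [Walk.length_append, pos_eq p hxp, pos_eq s hxs]
    have := length_split s hxs
    omega
  -- condition (b): every crossed common vertex has a nonempty "backward region"
  have hback : ∀ x, x ∈ CF → Odd (pos p x + pos s x) →
      ∃ y, y ∈ CF ∧ y ≠ x ∧ pos p y ≤ pos p x ∧ pos s y ≤ pos s x := by
    intro x hx hod
    by_contra hreg
    push_neg at hreg
    obtain ⟨hxp, hxs⟩ := (hmemCF x).mp hx
    have hxb : x ≠ b := by
      rintro rfl
      rw [pos_end p hp, pos_start s] at hod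
      rw [Nat.odd_iff] at hod
      rw [Nat.even_iff] at hΛ
      omega
    have hxv : x ≠ v := fun he => hvp (he ▸ hxp)
    have hplt : pos p x < p.length := by
      rcases lt_or_eq_of_le (pos_le p hxp) with h | h
      · exact h
      · exact absurd (pos_inj p hp hxp p.end_mem_support (by rw [h, pos_end p hp])) hxb
    have hslt : pos s x < s.length := by
      rcases lt_or_eq_of_le (pos_le s hxs) with h | h
      · exact h
      · exact absurd (pos_inj s hs hxs s.end_mem_support (by rw [h, pos_end s hs])) hxv
    have hmeet : ∀ y, y ∈ (p.takeUntil x hxp).support →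
        y ∈ (s.takeUntil x hxs).reverse.support → y = x := by
      intro y hy1 hy2
      have hy2' : y ∈ (s.takeUntil x hxs).support := mem_support_of_mem_reverse hy2
      have hyp : y ∈ p.support := p.support_takeUntil_subset hxp hy1
      have hys : y ∈ s.support := s.support_takeUntil_subset hxs hy2'
      by_contra hne
      have h1 : pos p y ≤ pos p x := by
        rw [pos_takeUntil p hxp hy1]
        calc pos (p.takeUntil x hxp) y ≤ (p.takeUntil x hxp).length := pos_le _ hy1
        _ = pos p x := (pos_eq p hxp).symm
      have h2 : pos s y ≤ pos s x := by
        rw [pos_takeUntil s hxs hy2']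
        calc pos (s.takeUntil x hxs) y ≤ (s.takeUntil x hxs).length := pos_le _ hy2'
        _ = pos s x := (pos_eq s hxs).symm
      have := hreg y ((hmemCF y).mpr ⟨hyp, hys⟩) hne h1
      omega
    have hWpath : ((p.takeUntil x hxp).append (s.takeUntil x hxs).reverse).IsPath :=
      isPath_append _ _ (hp.takeUntil hxp) ((hs.takeUntil hxs).reverse) hmeet
    have hWalt : AltOff M ((p.takeUntil x hxp).append (s.takeUntil x hxs).reverse) 0 := by
      refine AltOff.append (hpalt.takeUntil hxp) ?_
      refine (hsalt.takeUntil hxs).reverse ?_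
      rw [Nat.odd_iff] at hod
      rw [pos_eq p hxp, pos_eq s hxs] at hod
      omega
    have hlen : ((p.takeUntil x hxp).append (s.takeUntil x hxs).reverse).length =
        pos p x + pos s x := by
      rw [Walk.length_append, Walk.length_reverse, pos_eq p hxp, pos_eq s hxs]
    have := (hcon x hxp hxs).2 hod _ hWpath hWalt hlen hplt
    omega
  -- the common vertex with maximal position in s is crossed
  obtain ⟨xM, hxM, hxMmax⟩ := Finset.exists_max_image CF (pos s) ⟨b, hbCF⟩
  have hxMc : Odd (pos p xM + pos s xM) := by
    rcases Nat.even_or_odd (pos p xM + pos s xM) with hev | hod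
    · obtain ⟨y, hy, hyne, _, hy2⟩ := hfor xM hxM hev
      have : pos s y = pos s xM := le_antisymm (hxMmax y hy) hy2
      exact absurd (pos_inj s hs ((hmemCF y).mp hy).2 ((hmemCF xM).mp hxM).2 this) hyne
    · exact hod
  -- the crossed vertex with minimal position in p
  have hCrs : (CF.filter (fun x => Odd (pos p x + pos s x))).Nonempty :=
    ⟨xM, Finset.mem_filter.mpr ⟨hxM, hxMc⟩⟩
  obtain ⟨xh, hxh, hxhmin⟩ := Finset.exists_min_image _ (pos p) hCrs
  obtain ⟨hxhCF, hxhodd⟩ := Finset.mem_filter.mp hxh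
  obtain ⟨y0, hy0, hy0ne, hy0p, hy0s⟩ := hback xh hxhCF hxhodd
  have hy0al : ¬ Odd (pos p y0 + pos s y0) := by
    intro hody
    have := hxhmin y0 (Finset.mem_filter.mpr ⟨hy0, hody⟩)
    have heq : pos p y0 = pos p xh := le_antisymm hy0p this
    exact hy0ne (pos_inj p hp ((hmemCF y0).mp hy0).1 ((hmemCF xh).mp hxhCF).1 heq)
  have hy0lt : pos p y0 < pos p xh := by
    rcases lt_or_eq_of_le hy0p with h | h
    · exact h
    · exact absurd (pos_inj p hp ((hmemCF y0).mp hy0).1 ((hmemCF xh).mp hxhCF).1 h) hy0ne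
  -- descent
  have claim : ∀ n : ℕ, ∀ y, y ∈ CF → ¬ Odd (pos p y + pos s y) → pos p y < pos p xh →
      pos p y = n → False := by
    intro n
    induction n using Nat.strong_induction_on with
    | _ n IH =>
      intro y hy hyal hylt hyn
      obtain ⟨z, hz, hzne, hzp, hzs⟩ := hfor y hy (Nat.not_odd_iff_even.mp hyal)
      have hzlt : pos p z < pos p y := by
        rcases lt_or_eq_of_le hzp with h | h
        · exact h
        · exact absurd (pos_inj p hp ((hmemCF z).mp hz).1 ((hmemCF y).mp hy).1 h) hzne
      have hzal : ¬ Odd (pos p z + pos s z) := by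
        intro hodz
        have := hxhmin z (Finset.mem_filter.mpr ⟨hz, hodz⟩)
        omega
      exact IH (pos p z) (by omega) z hz hzal (by omega) rfl
  exact claim (pos p y0) y0 hy0 hy0al hy0lt rfl

end Grid

section Apps

variable {G : SimpleGraph V} {M : G.Subgraph}

lemma single_edge_altOff {x y : V} (hadj : G.Adj x y) (off : ℕ)
    (h : s(x, y) ∈ M.edgeSet ↔ Odd off) : AltOff M (Walk.cons hadj Walk.nil) off := by
  intro i hi
  have hi0 : i = 0 := by
    simp only [Walk.edges_cons, Walk.edges_nil, List.length_cons, List.length_nil] at hi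
    omega
  subst hi0
  simpa using h

/-- Generic splice application: splicing an alternating path `r` (from an unmatched vertex)
into the part of a minimum path `u` after `b` yields either the "aligned" inequality or a
bound on a level of `b` of controlled parity. -/
lemma app_core {f v b f' c : V} (u : G.Walk f v) (hup : u.IsPath) (hualt : AltOff M u 0)
    (hb : b ∈ u.support)
    (hLlev : ∀ (f'' : V) (W : G.Walk f'' v), f'' ∉ M.verts → W.IsPath → AltOff M W 0 →
      W.length % 2 = u.length % 2 → u.length ≤ W.length)
    (r : G.Walk f' c) (hr : r.IsPath) (hralt : AltOff M r 0) (hf' : f' ∉ M.verts)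
    (hc : c ∈ (u.dropUntil b hb).support) :
    (∃ a : ℕ, a ≤ r.length ∧ (u.takeUntil b hb).length ≤ a) ∨
    (∃ n : ℕ, n ≤ r.length + (u.dropUntil b hb).length ∧
      n % 2 = ((u.takeUntil b hb).length + 1) % 2 ∧
      ((Even n ∧ evenlevel G M b ≤ (n : ℕ∞)) ∨ (Odd n ∧ oddlevel G M b ≤ (n : ℕ∞)))) := by
  obtain ⟨x, hxq, hxr, heven, hodd⟩ := splice u hup hualt hb r hr hralt hc
  set a := (r.takeUntil x hxr).length with hadef
  set ℓ := (u.takeUntil b hb).length with hldef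
  set d := ((u.dropUntil b hb).takeUntil x hxq).length with hddef
  have ha_le : a ≤ r.length := r.length_takeUntil_le hxr
  have hd_le : d ≤ (u.dropUntil b hb).length := (u.dropUntil b hb).length_takeUntil_le hxq
  rcases Nat.even_or_odd (a + ℓ + d) with hpar | hpar
  · -- aligned: forward splice gives a path to v of the same parity as u
    obtain ⟨W, hWp, hWa, hWlen⟩ := heven hpar
    have hWpar : W.length % 2 = u.length % 2 := by
      rw [Nat.even_iff] at hpar
      omega
    have := hLlev f' W hf' hWp hWa hWpar
    left
    exact ⟨a, ha_le, by omega⟩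
  · -- crossed: backward splice gives a path to b
    obtain ⟨W, hWp, hWa, hWlen⟩ := hodd hpar
    right
    refine ⟨a + d, by omega, by rw [Nat.odd_iff] at hpar; omega, ?_⟩
    rcases Nat.even_or_odd (a + d) with hev | hod
    · refine Or.inl ⟨hev, ?_⟩
      have := evenlevel_le W hf' hWp hWa (by rwa [hWlen])
      rwa [hWlen] at this
    · refine Or.inr ⟨hod, ?_⟩
      have := oddlevel_le W hf' hWp hWa (by rwa [hWlen])
      rwa [hWlen] at this

end Apps

section Main

variable {G : SimpleGraph V} {M : G.Subgraph} {v b : V}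

lemma base_on_path (hbase : IsBase G M v b) {f : V} (u : G.Walk f v)
    (hmin : IsMinPathTo G M v f u) :
    ∃ hb : b ∈ u.support, tenacity G M v < tenacity G M b ∧
      ∀ y, y ∈ (u.dropUntil b hb).support → y ≠ b → ¬ (tenacity G M v < tenacity G M y) := by
  obtain ⟨hb, hten, hfar⟩ := hbase f u hmin
  refine ⟨hb, hten, ?_⟩
  intro y hy hyb hty
  have hup : u.IsPath := hmin.2.1
  have hyu : y ∈ u.support := u.support_dropUntil_subset hb hy
  have h1 := hfar y hyu hty
  have h2 : pos u b < pos u y := pos_lt_of_mem_dropUntil u hup hb hy hyb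
  rw [pos_eq u hb, pos_eq u hyu] at h2
  omega

end Main

section MainCore

variable {G : SimpleGraph V} {M : G.Subgraph} {v b : V}

lemma main_core (hM : M.IsMatching) (hbase : IsBase G M v b)
    {e o : ℕ} (he : evenlevel G M v = (e : ℕ∞)) (ho : oddlevel G M v = (o : ℕ∞))
    (hee : Even e) (hoo : Odd o) (hlm : ((e + o : ℕ) : ℕ∞) < lm G M) :
    ∃ Λ : ℕ, Even Λ ∧ evenlevel G M b = (Λ : ℕ∞) ∧
      evenlevelFrom G M b v = ((e - Λ : ℕ) : ℕ∞) ∧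
      oddlevelFrom G M b v = ((o - Λ : ℕ) : ℕ∞) ∧ Λ < e ∧ Λ < o ∧
      ∀ (f : V) (u : G.Walk f v), IsMinPathTo G M v f u →
        ∀ hb : b ∈ u.support, (u.takeUntil b hb).length = Λ := by
  obtain ⟨fe, we, hfe, hwep, hwea, hwee, hwel⟩ := evenlevel_witness he
  obtain ⟨fo, wo, hfo, hwop, hwoa, hwoo, hwol⟩ := oddlevel_witness ho
  have hwemin : IsMinPathTo G M v fe we :=
    ⟨hfe, hwep, (isAlt_iff_altOff _).mpr hwea, Or.inl ⟨hwee, by rw [hwel, he]⟩⟩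
  have hwomin : IsMinPathTo G M v fo wo :=
    ⟨hfo, hwop, (isAlt_iff_altOff _).mpr hwoa, Or.inr ⟨hwoo, by rw [hwol, ho]⟩⟩
  have htv : tenacity G M v = ((e + o : ℕ) : ℕ∞) := by
    rw [tenacity, he, ho]; push_cast; ring
  obtain ⟨hbe, htenb, hlowe⟩ := base_on_path hbase we hwemin
  obtain ⟨hbo, htenb', hlowo⟩ := base_on_path hbase wo hwomin
  have hbv : b ≠ v := by
    rintro rfl
    exact lt_irrefl _ htenb
  have hcontra : ∀ n1 n2 : ℕ, evenlevel G M b ≤ (n1 : ℕ∞) → oddlevel G M b ≤ (n2 : ℕ∞) →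
      n1 + n2 ≤ e + o → False := by
    intro n1 n2 h1 h2 h3
    have hte : tenacity G M b ≤ ((n1 + n2 : ℕ) : ℕ∞) := by
      rw [tenacity]; push_cast; exact add_le_add h1 h2
    have h4 : tenacity G M b ≤ ((e + o : ℕ) : ℕ∞) := le_trans hte (by exact_mod_cast h3)
    rw [htv] at htenb
    exact absurd htenb (not_lt.mpr h4)
  have hlen_min : ∀ (f : V) (u : G.Walk f v), IsMinPathTo G M v f u →
      (Even u.length ∧ u.length = e) ∨ (Odd u.length ∧ u.length = o) := by
    intro f u hmin
    rcases hmin.2.2.2 with ⟨hev, hl⟩ | ⟨hod, hl⟩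
    · refine Or.inl ⟨hev, ?_⟩
      rw [he] at hl; exact_mod_cast hl
    · refine Or.inr ⟨hod, ?_⟩
      rw [ho] at hl; exact_mod_cast hl
  have hpre : ∀ (f : V) (u : G.Walk f v), IsMinPathTo G M v f u →
      ∀ hb : b ∈ u.support,
      (u.takeUntil b hb).length < u.length ∧
      (Even (u.takeUntil b hb).length →
        evenlevel G M b ≤ ((u.takeUntil b hb).length : ℕ∞)) ∧
      (Odd (u.takeUntil b hb).length →
        oddlevel G M b ≤ ((u.takeUntil b hb).length : ℕ∞)) := by
    intro f u hmin hb
    obtain ⟨hf, hup, hualt', _⟩ := hmin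
    have halt0 : AltOff M u 0 := (isAlt_iff_altOff u).mp hualt'
    have hlt : (u.takeUntil b hb).length < u.length := by
      have h1 := length_split u hb
      rcases Nat.eq_zero_or_pos (u.dropUntil b hb).length with h0 | hp0
      · exact absurd (eq_of_length_zero _ h0) hbv
      · omega
    exact ⟨hlt,
      fun hev => evenlevel_le _ hf (hup.takeUntil hb) (halt0.takeUntil hb) hev,
      fun hod => oddlevel_le _ hf (hup.takeUntil hb) (halt0.takeUntil hb) hod⟩
  have hLlev : ∀ (f : V) (u : G.Walk f v), IsMinPathTo G M v f u →
      ∀ (f'' : V) (W : G.Walk f'' v), f'' ∉ M.verts → W.IsPath → AltOff M W 0 →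
        W.length % 2 = u.length % 2 → u.length ≤ W.length := by
    intro f u hmin f'' W hf'' hWp hWa hWpar
    rcases hlen_min f u hmin with ⟨hev, hl⟩ | ⟨hod, hl⟩
    · have hWev : Even W.length := by
        rw [Nat.even_iff] at hev ⊢; omega
      have h1 := evenlevel_le W hf'' hWp hWa hWev
      rw [he] at h1
      have h2 : e ≤ W.length := by exact_mod_cast h1
      omega
    · have hWod : Odd W.length := by
        rw [Nat.odd_iff] at hod ⊢; omega
      have h1 := oddlevel_le W hf'' hWp hWa hWod
      rw [ho] at h1
      have h2 : o ≤ W.length := by exact_mod_cast h1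
      omega
  -- Claim 1: prefixes of even and odd minimum paths have equal parity
  have claim1 : ∀ (f1 : V) (u1 : G.Walk f1 v), IsMinPathTo G M v f1 u1 →
      ∀ hb1 : b ∈ u1.support, ∀ (f2 : V) (u2 : G.Walk f2 v), IsMinPathTo G M v f2 u2 →
      ∀ hb2 : b ∈ u2.support, Even u1.length → Odd u2.length →
      (u1.takeUntil b hb1).length % 2 = (u2.takeUntil b hb2).length % 2 := by
    intro f1 u1 hm1 hb1 f2 u2 hm2 hb2 hev hod
    obtain ⟨hlt1, heb1, hob1⟩ := hpre f1 u1 hm1 hb1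
    obtain ⟨hlt2, heb2, hob2⟩ := hpre f2 u2 hm2 hb2
    have hl1 : u1.length = e :=
      ((hlen_min f1 u1 hm1).resolve_right (fun h => (Nat.not_odd_iff_even.mpr hev) h.1)).2
    have hl2 : u2.length = o :=
      ((hlen_min f2 u2 hm2).resolve_left (fun h => (Nat.not_odd_iff_even.mpr h.1) hod)).2
    by_contra hne
    rcases Nat.even_or_odd (u1.takeUntil b hb1).length with h1 | h1
    · have h2 : Odd (u2.takeUntil b hb2).length := by
        rw [Nat.even_iff] at h1; rw [Nat.odd_iff]; omega
      exact hcontra _ _ (heb1 h1) (hob2 h2) (by omega)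
    · have h2 : Even (u2.takeUntil b hb2).length := by
        rw [Nat.odd_iff] at h1; rw [Nat.even_iff]; omega
      exact hcontra _ _ (heb2 h2) (hob1 h1) (by omega)
  -- Claim B: a minimum path of small length has a prefix of even length
  have claimB : ∀ (f0 : V) (u0 : G.Walk f0 v), IsMinPathTo G M v f0 u0 →
      ∀ hb0 : b ∈ u0.support, 2 * u0.length ≤ e + o + 1 →
      ¬ Odd (u0.takeUntil b hb0).length := by
    intro f0 u0 hm0 hb0 hsmall hlodd
    have hf0 : f0 ∉ M.verts := hm0.1
    have hu0p : u0.IsPath := hm0.2.1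
    have hu0alt : AltOff M u0 0 := (isAlt_iff_altOff u0).mp hm0.2.2.1
    obtain ⟨hlt0, heb0, hob0⟩ := hpre f0 u0 hm0 hb0
    obtain ⟨hbase0, hten0, hlow0⟩ := base_on_path hbase u0 hm0
    have hQ0len : (u0.takeUntil b hb0).length + (u0.dropUntil b hb0).length = u0.length :=
      length_split u0 hb0
    have hQ0pos : 0 < (u0.dropUntil b hb0).length := by omega
    obtain ⟨b', hadjb, Qtail, hQ0eq⟩ := exists_cons_of_pos (u0.dropUntil b hb0) hQ0pos
    have hQ0alt : AltOff M (u0.dropUntil b hb0) (u0.takeUntil b hb0).length := by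
      have := hu0alt.dropUntil hb0
      rwa [Nat.zero_add] at this
    have h0lt : 0 < (u0.dropUntil b hb0).edges.length := by
      rw [Walk.length_edges]; exact hQ0pos
    have hedge0 : (u0.dropUntil b hb0).edges.get ⟨0, h0lt⟩ = s(b, b') := by
      have h1 : (u0.dropUntil b hb0).edges.get ⟨0, h0lt⟩ =
          (Walk.cons hadjb Qtail).edges.get ⟨0, by rw [← hQ0eq]; exact h0lt⟩ :=
        list_get_congr (by rw [hQ0eq]) _ _
      rw [h1, edges_get_zero_cons]
    have hmatched : s(b, b') ∈ M.edgeSet := by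
      have h1 := hQ0alt 0 h0lt
      rw [hedge0] at h1
      refine h1.mpr ?_
      simpa using hlodd
    have hMadj : M.Adj b b' := Subgraph.mem_edgeSet.mp hmatched
    have hGadj : G.Adj b b' := M.adj_sub hMadj
    have hbb' : b' ≠ b := fun h => G.irrefl (h ▸ hGadj)
    have hb'Q : b' ∈ (u0.dropUntil b hb0).support := by rw [hQ0eq]; simp
    have hlowb' : tenacity G M b' ≤ ((e + o : ℕ) : ℕ∞) := by
      have h1 := hlow0 b' hb'Q hbb'
      rw [htv] at h1
      exact not_lt.mp h1
    have hoddb'fin : oddlevel G M b' ≤ ((e + o : ℕ) : ℕ∞) := by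
      refine le_trans ?_ hlowb'
      rw [tenacity]
      exact le_add_self
    obtain ⟨μ, hμeq, hμle⟩ := ENat.le_coe_iff.mp hoddb'fin
    obtain ⟨fρ, ρ, hfρ, hρp, hρalt, hρodd, hρlen⟩ := oddlevel_witness hμeq
    have hμodd : Odd μ := hρlen ▸ hρodd
    -- b does not lie on ρ
    have hbρ : b ∉ ρ.support := by
      intro hbmem
      have hbfρ : b ≠ fρ := by
        rintro rfl
        exact hfρ hMadj.fst_mem
      have hbne : b ≠ b' := fun h => hbb' h.symm
      have hsplit := length_split ρ hbmem
      have hgpos : 0 < (ρ.takeUntil b hbmem).length := by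
        rcases Nat.eq_zero_or_pos (ρ.takeUntil b hbmem).length with h0 | h
        · exact absurd ((length_takeUntil_eq_zero_iff ρ hbmem).mp h0).symm hbfρ.symm
        · exact h
      have hdpos : 0 < (ρ.dropUntil b hbmem).length := by
        rcases Nat.eq_zero_or_pos (ρ.dropUntil b hbmem).length with h0 | h
        · exact absurd (eq_of_length_zero _ h0) hbne
        · exact h
      have hedges : ρ.edges = (ρ.takeUntil b hbmem).edges ++ (ρ.dropUntil b hbmem).edges := by
        conv_lhs => rw [← ρ.take_spec hbmem]
        rw [Walk.edges_append]
      rcases Nat.even_or_odd (ρ.takeUntil b hbmem).length with hgev | hgod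
      · -- incoming edge of ρ at b is matched, so the previous vertex is b'
        obtain ⟨z, hzmem, hzne, hzadj, hzedge⟩ :=
          exists_last_edge (ρ.takeUntil b hbmem) hgpos
        have hple : (ρ.takeUntil b hbmem).length - 1 < (ρ.takeUntil b hbmem).edges.length := by
          rw [Walk.length_edges]; omega
        have hglt : (ρ.takeUntil b hbmem).length - 1 < ρ.edges.length := by
          rw [Walk.length_edges]; omega
        have hedgeeq : ρ.edges.get ⟨(ρ.takeUntil b hbmem).length - 1, hglt⟩ =
            (ρ.takeUntil b hbmem).edges.get ⟨(ρ.takeUntil b hbmem).length - 1, hple⟩ := by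
          rw [list_get_congr hedges hglt (by rw [← hedges]; exact hglt)]
          rw [list_get_append_left _ _ hple]
        have hmz : s(z, b) ∈ M.edgeSet := by
          have h1 := hρalt _ hglt
          rw [hedgeeq, hzedge hple] at h1
          refine h1.mpr ?_
          rw [Nat.even_iff] at hgev
          rw [Nat.odd_iff]
          omega
        have hzb' : z = b' := by
          obtain ⟨w, _, huniq⟩ := hM hMadj.fst_mem
          have h1 := huniq z (Subgraph.mem_edgeSet.mp (by rwa [Sym2.eq_swap] at hmz))
          have h2 := huniq b' hMadj
          rw [h1, h2]
        have hz2 : z ∈ (ρ.dropUntil b hbmem).support := by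
          rw [hzb']
          exact (ρ.dropUntil b hbmem).end_mem_support
        have hzb := meet_of_isPath ρ hρp hbmem hzmem hz2
        exact hbne (by rw [← hzb, hzb'])
      · -- outgoing edge of ρ at b is matched, so the next vertex is b'
        obtain ⟨y, hady, ρ2', hρ2eq⟩ := exists_cons_of_pos (ρ.dropUntil b hbmem) hdpos
        have hglt : (ρ.takeUntil b hbmem).length < ρ.edges.length := by
          rw [Walk.length_edges]; omega
        have hd0 : 0 < (ρ.dropUntil b hbmem).edges.length := by
          rw [Walk.length_edges]; exact hdpos
        have hedgeg : ρ.edges.get ⟨(ρ.takeUntil b hbmem).length, hglt⟩ =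
            (ρ.dropUntil b hbmem).edges.get ⟨0, hd0⟩ := by
          rw [list_get_congr hedges hglt (by rw [← hedges]; exact hglt)]
          rw [list_get_append_right _ _ (by rw [Walk.length_edges])
            (h'' := by rw [Walk.length_edges, Walk.length_edges]; omega)]
          refine list_get_idx_congr ?_ _ _
          rw [Walk.length_edges]
          omega
        have hedgeyval : (ρ.dropUntil b hbmem).edges.get ⟨0, hd0⟩ = s(b, y) := by
          have h1 : (ρ.dropUntil b hbmem).edges.get ⟨0, hd0⟩ =
              (Walk.cons hady ρ2').edges.get ⟨0, by rw [← hρ2eq]; exact hd0⟩ :=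
            list_get_congr (by rw [hρ2eq]) _ _
          rw [h1, edges_get_zero_cons]
        have hmy : s(b, y) ∈ M.edgeSet := by
          have h1 := hρalt _ hglt
          rw [hedgeg, hedgeyval] at h1
          refine h1.mpr ?_
          rw [Nat.odd_iff] at hgod ⊢
          omega
        have hyb' : y = b' := by
          obtain ⟨w, _, huniq⟩ := hM hMadj.fst_mem
          have h1 := huniq y (Subgraph.mem_edgeSet.mp hmy)
          have h2 := huniq b' hMadj
          rw [h1, h2]
        subst hyb'
        -- then the rest of ρ after this matched edge is a closed path at b', so trivial
        have hρ2p : (Walk.cons hady ρ2').IsPath := by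
          rw [← hρ2eq]
          exact hρp.dropUntil hbmem
        have hρ2'p : ρ2'.IsPath := hρ2p.of_cons
        have hρ2'0 : ρ2'.length = 0 := length_zero_of_isPath_loop _ hρ2'p
        have hdlen : (ρ.dropUntil b hbmem).length = 1 := by
          have : (ρ.dropUntil b hbmem).length = (Walk.cons hady ρ2').length := by rw [hρ2eq]
          rw [this, Walk.length_cons, hρ2'0]
        rw [Nat.odd_iff] at hμodd hgod
        rw [hρlen] at hsplit
        omega
    -- evenlevel b ≤ μ + 1 via ρ extended by the matched edge
    have hσsingle : AltOff M (Walk.cons hGadj.symm Walk.nil) μ := by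
      refine single_edge_altOff _ μ ?_
      rw [Sym2.eq_swap]
      exact iff_of_true hmatched hμodd
    have hσalt : AltOff M (ρ.append (Walk.cons hGadj.symm Walk.nil)) 0 := by
      refine AltOff.append hρalt ?_
      have : AltOff M (Walk.cons hGadj.symm Walk.nil) (0 + ρ.length) := by
        rw [Nat.zero_add, hρlen]; exact hσsingle
      exact this
    have hσpath : (ρ.append (Walk.cons hGadj.symm Walk.nil)).IsPath := by
      refine isPath_append _ _ hρp ?_ ?_
      · rw [Walk.isPath_def]
        simp [hbb']
      · intro y hy1 hy2
        have hy2' : y = b' ∨ y = b := by simpa using hy2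
        rcases hy2' with h | h
        · exact h
        · exact absurd (h ▸ hy1) hbρ
    have hevb : evenlevel G M b ≤ ((μ + 1 : ℕ) : ℕ∞) := by
      have h1 := evenlevel_le (ρ.append (Walk.cons hGadj.symm Walk.nil)) hfρ hσpath hσalt
        (by rw [Walk.length_append, Walk.length_cons, Walk.length_nil, hρlen]
            exact hμodd.add_one)
      rw [Walk.length_append, Walk.length_cons, Walk.length_nil, hρlen] at h1
      exact h1
    have hoddbl : oddlevel G M b ≤ (((u0.takeUntil b hb0).length : ℕ) : ℕ∞) := hob0 hlodd
    have hsum : ¬ (μ + 1 + (u0.takeUntil b hb0).length ≤ e + o) := fun h =>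
      hcontra (μ + 1) (u0.takeUntil b hb0).length hevb hoddbl h
    rw [tenacity, hμeq] at hlowb'
    obtain ⟨m', hm'eq, hm'le⟩ := ENat.le_coe_iff.mp (le_trans le_self_add hlowb')
    have hm'μ : m' + μ ≤ e + o := by
      rw [hm'eq] at hlowb'
      exact_mod_cast hlowb'
    obtain ⟨fR, R, hfR, hRp, hRalt, hRev, hRlen⟩ := evenlevel_witness hm'eq
    have hm'ev : Even m' := hRlen ▸ hRev
    have hm'lt : m' < (u0.takeUntil b hb0).length := by
      rw [Nat.even_iff] at hm'ev
      rw [Nat.odd_iff] at hlodd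
      omega
    rcases app_core u0 hu0p hu0alt hb0 (hLlev f0 u0 hm0) R hRp hRalt hfR hb'Q with
      ⟨a, ha1, ha2⟩ | ⟨n, hn1, hn2, hn3⟩
    · omega
    · have hnev : Even n := by
        rw [Nat.even_iff]
        rw [Nat.odd_iff] at hlodd
        omega
      rcases hn3 with ⟨_, hnb⟩ | ⟨hodn, _⟩
      · refine hcontra n (u0.takeUntil b hb0).length hnb hoddbl ?_
        omega
      · exact (Nat.not_odd_iff_even.mpr hnev) hodn
  -- Phase I: all prefixes have even length
  have hparewo : (we.takeUntil b hbe).length % 2 = (wo.takeUntil b hbo).length % 2 :=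
    claim1 fe we hwemin hbe fo wo hwomin hbo hwee hwoo
  have hweev2 : (we.takeUntil b hbe).length % 2 = 0 := by
    rcases (by omega : (2 * we.length ≤ e + o + 1 ∧ we.length = e) ∨
        (2 * wo.length ≤ e + o + 1 ∧ wo.length = o)) with ⟨hs, _⟩ | ⟨hs, _⟩
    · have h1 := claimB fe we hwemin hbe hs
      rw [Nat.odd_iff] at h1; omega
    · have h1 := claimB fo wo hwomin hbo hs
      rw [Nat.odd_iff] at h1; omega
  have hpar_even : ∀ (f : V) (u : G.Walk f v), IsMinPathTo G M v f u →
      ∀ hb : b ∈ u.support, Even (u.takeUntil b hb).length := by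
    intro f u hmin hb
    rcases hlen_min f u hmin with ⟨hev, _⟩ | ⟨hod, _⟩
    · have h1 := claim1 f u hmin hb fo wo hwomin hbo hev hwoo
      rw [Nat.even_iff]; omega
    · have h1 := claim1 fe we hwemin hbe f u hmin hb hwee hod
      rw [Nat.even_iff]; omega
  -- Phase 1.5: all prefixes have the same length
  have claimC : ∀ (f1 : V) (u1 : G.Walk f1 v), IsMinPathTo G M v f1 u1 →
      ∀ hb1 : b ∈ u1.support, ∀ (f2 : V) (u2 : G.Walk f2 v), IsMinPathTo G M v f2 u2 →
      ∀ hb2 : b ∈ u2.support, Even u1.length → Odd u2.length →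
      (u1.takeUntil b hb1).length = (u2.takeUntil b hb2).length := by
    intro f1 u1 hm1 hb1 f2 u2 hm2 hb2 hev hod
    have hl1 : u1.length = e :=
      ((hlen_min f1 u1 hm1).resolve_right (fun h => (Nat.not_odd_iff_even.mpr hev) h.1)).2
    have hl2 : u2.length = o :=
      ((hlen_min f2 u2 hm2).resolve_left (fun h => (Nat.not_odd_iff_even.mpr h.1) hod)).2
    have he1 : Even (u1.takeUntil b hb1).length := hpar_even f1 u1 hm1 hb1
    have he2 : Even (u2.takeUntil b hb2).length := hpar_even f2 u2 hm2 hb2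
    obtain ⟨hlt1, heb1, _⟩ := hpre f1 u1 hm1 hb1
    obtain ⟨hlt2, heb2, _⟩ := hpre f2 u2 hm2 hb2
    have hQ1 := length_split u1 hb1
    have hQ2 := length_split u2 hb2
    have hdir1 : (u1.takeUntil b hb1).length ≤ (u2.takeUntil b hb2).length := by
      rcases app_core u1 hm1.2.1 ((isAlt_iff_altOff u1).mp hm1.2.2.1) hb1 (hLlev f1 u1 hm1)
          (u2.takeUntil b hb2) (hm2.2.1.takeUntil hb2)
          (((isAlt_iff_altOff u2).mp hm2.2.2.1).takeUntil hb2) hm2.1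
          (Walk.start_mem_support _) with ⟨a, ha1, ha2⟩ | ⟨n, hn1, hn2, hn3⟩
      · have := u2.length_takeUntil_le hb2
        omega
      · have hnodd : Odd n := by
          rw [Nat.odd_iff]; rw [Nat.even_iff] at he1; omega
        rcases hn3 with ⟨hevn, _⟩ | ⟨_, hnb⟩
        · exact ((Nat.not_odd_iff_even.mpr hevn) hnodd).elim
        · exact (hcontra _ n (heb1 he1) hnb (by omega)).elim
    have hdir2 : (u2.takeUntil b hb2).length ≤ (u1.takeUntil b hb1).length := by
      rcases app_core u2 hm2.2.1 ((isAlt_iff_altOff u2).mp hm2.2.2.1) hb2 (hLlev f2 u2 hm2)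
          (u1.takeUntil b hb1) (hm1.2.1.takeUntil hb1)
          (((isAlt_iff_altOff u1).mp hm1.2.2.1).takeUntil hb1) hm1.1
          (Walk.start_mem_support _) with ⟨a, ha1, ha2⟩ | ⟨n, hn1, hn2, hn3⟩
      · have := u1.length_takeUntil_le hb1
        omega
      · have hnodd : Odd n := by
          rw [Nat.odd_iff]; rw [Nat.even_iff] at he2; omega
        rcases hn3 with ⟨hevn, _⟩ | ⟨_, hnb⟩
        · exact ((Nat.not_odd_iff_even.mpr hevn) hnodd).elim
        · exact (hcontra _ n (heb2 he2) hnb (by omega)).elim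
    omega
  set Λ : ℕ := (we.takeUntil b hbe).length with hΛdef
  have hΛeven : Even Λ := hpar_even fe we hwemin hbe
  have hΛo : (wo.takeUntil b hbo).length = Λ :=
    (claimC fe we hwemin hbe fo wo hwomin hbo hwee hwoo).symm
  have hΛlt_e : Λ < e := by
    have := (hpre fe we hwemin hbe).1
    omega
  have hΛlt_o : Λ < o := by
    have := (hpre fo wo hwomin hbo).1
    omega
  have hall : ∀ (f : V) (u : G.Walk f v), IsMinPathTo G M v f u →
      ∀ hb : b ∈ u.support, (u.takeUntil b hb).length = Λ := by
    intro f u hmin hb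
    rcases hlen_min f u hmin with ⟨hev, _⟩ | ⟨hod, _⟩
    · rw [claimC f u hmin hb fo wo hwomin hbo hev hwoo, hΛo]
    · rw [← claimC fe we hwemin hbe f u hmin hb hwee hod]
  -- a small minimum path
  obtain ⟨f0, u0, hm0, h2L⟩ : ∃ (f0 : V) (u0 : G.Walk f0 v), IsMinPathTo G M v f0 u0 ∧
      2 * u0.length ≤ e + o + 1 := by
    rcases Nat.lt_or_ge e o with h | h
    · exact ⟨fe, we, hwemin, by omega⟩
    · exact ⟨fo, wo, hwomin, by omega⟩
  obtain ⟨hb0, _, _⟩ := base_on_path hbase u0 hm0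
  have hΛ0 : (u0.takeUntil b hb0).length = Λ := hall f0 u0 hm0 hb0
  have hsplit0 := length_split u0 hb0
  have hlt0 := (hpre f0 u0 hm0 hb0).1
  -- Phase II: evenlevel b = Λ
  have hevenb : evenlevel G M b = (Λ : ℕ∞) := by
    refine le_antisymm (by rw [hΛdef]; exact (hpre fe we hwemin hbe).2.1 hΛeven) ?_
    by_contra hltb
    push_neg at hltb
    obtain ⟨m, hmeq, hmlt⟩ : ∃ m : ℕ, evenlevel G M b = (m : ℕ∞) ∧ m < Λ := by
      obtain ⟨k, hk, _⟩ := ENat.le_coe_iff.mp hltb.le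
      refine ⟨k, hk, ?_⟩
      rw [hk] at hltb
      exact_mod_cast hltb
    obtain ⟨fR, R, hfR, hRp, hRalt, hRev, hRlen⟩ := evenlevel_witness hmeq
    have hmev : Even m := hRlen ▸ hRev
    rcases app_core u0 hm0.2.1 ((isAlt_iff_altOff u0).mp hm0.2.2.1) hb0 (hLlev f0 u0 hm0)
        R hRp hRalt hfR (Walk.start_mem_support _) with ⟨a, ha1, ha2⟩ | ⟨n, hn1, hn2, hn3⟩
    · omega
    · have hnodd : Odd n := by
        rw [Nat.odd_iff]
        rw [Nat.even_iff] at hΛeven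
        omega
      rcases hn3 with ⟨hevn, _⟩ | ⟨_, hnb⟩
      · exact (Nat.not_odd_iff_even.mpr hevn) hnodd
      · refine hcontra m n (le_of_eq hmeq) hnb ?_
        rw [Nat.even_iff] at hΛeven hmev
        omega
  -- Phase III: the two "from" levels
  have hvp : v ∉ (we.takeUntil b hbe).support := by
    intro hvmem
    exact hbv (meet_of_isPath we hwep hbe hvmem ((we.dropUntil b hbe).end_mem_support)).symm
  have hsplite := length_split we hbe
  have hsplito := length_split wo hbo
  have hFe : evenlevelFrom G M b v = ((e - Λ : ℕ) : ℕ∞) := by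
    refine le_antisymm ?_ ?_
    · have hQealt : AltOff M (we.dropUntil b hbe) 0 := by
        refine (hwea.dropUntil hbe).congr_parity ?_
        rw [Nat.even_iff] at hΛeven
        omega
      have h1 := evenlevelFrom_le (we.dropUntil b hbe) (hwep.dropUntil hbe) hQealt
        (by rw [Nat.even_iff] at hΛeven hwee ⊢; omega)
      have h2 : (we.dropUntil b hbe).length = e - Λ := by omega
      rwa [h2] at h1
    · rw [evenlevelFrom]
      refine le_sInf ?_
      rintro n ⟨s, hsp, hsalt', hsev, rfl⟩
      rw [Nat.cast_le]
      by_contra hslt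
      push_neg at hslt
      have hsalt : AltOff M s 0 := (isAlt_iff_altOff s).mp hsalt'
      obtain ⟨x, hxp, hxs, hcase⟩ := grid (we.takeUntil b hbe) (hwep.takeUntil hbe)
        (hwea.takeUntil hbe) hΛeven s hsp hsalt hvp
      have hip : pos (we.takeUntil b hbe) x ≤ Λ := by
        have := pos_le (we.takeUntil b hbe) hxp
        omega
      rcases hcase with ⟨hal, W, hWp, hWa, hWlen⟩ | ⟨hcr, W, hWp, hWa, hWlen, hilt, hklt⟩
      · have hWpar : W.length % 2 = we.length % 2 := by
          rw [Nat.even_iff] at hal hsev hwee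
          omega
        have h1 := hLlev fe we hwemin fe W hfe hWp hWa hWpar
        omega
      · have hnodd : Odd W.length := by rw [hWlen]; exact hcr
        have hob : oddlevel G M b ≤ (W.length : ℕ∞) := oddlevel_le W hfe hWp hWa hnodd
        refine hcontra Λ W.length (le_of_eq hevenb) hob ?_
        omega
  have hFo : oddlevelFrom G M b v = ((o - Λ : ℕ) : ℕ∞) := by
    refine le_antisymm ?_ ?_
    · have hQoalt : AltOff M (wo.dropUntil b hbo) 0 := by
        refine (hwoa.dropUntil hbo).congr_parity ?_
        rw [Nat.even_iff] at hΛeven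
        omega
      have h1 := oddlevelFrom_le (wo.dropUntil b hbo) (hwop.dropUntil hbo) hQoalt
        (by rw [Nat.even_iff] at hΛeven; rw [Nat.odd_iff] at hwoo ⊢; omega)
      have h2 : (wo.dropUntil b hbo).length = o - Λ := by omega
      rwa [h2] at h1
    · rw [oddlevelFrom]
      refine le_sInf ?_
      rintro n ⟨s, hsp, hsalt', hsod, rfl⟩
      rw [Nat.cast_le]
      by_contra hslt
      push_neg at hslt
      have hsalt : AltOff M s 0 := (isAlt_iff_altOff s).mp hsalt'
      obtain ⟨x, hxp, hxs, hcase⟩ := grid (we.takeUntil b hbe) (hwep.takeUntil hbe)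
        (hwea.takeUntil hbe) hΛeven s hsp hsalt hvp
      have hip : pos (we.takeUntil b hbe) x ≤ Λ := by
        have := pos_le (we.takeUntil b hbe) hxp
        omega
      rcases hcase with ⟨hal, W, hWp, hWa, hWlen⟩ | ⟨hcr, W, hWp, hWa, hWlen, hilt, hklt⟩
      · have hWpar : W.length % 2 = wo.length % 2 := by
          rw [Nat.even_iff] at hal
          rw [Nat.odd_iff] at hsod hwoo
          omega
        have h1 := hLlev fo wo hwomin fe W hfe hWp hWa hWpar
        omega
      · have hnodd : Odd W.length := by rw [hWlen]; exact hcr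
        have hob : oddlevel G M b ≤ (W.length : ℕ∞) := oddlevel_le W hfe hWp hWa hnodd
        refine hcontra Λ W.length (le_of_eq hevenb) hob ?_
        omega
  exact ⟨Λ, hΛeven, hevenb, hFe, hFo, hΛlt_e, hΛlt_o, hall⟩

end MainCore

/-- Every `evenlevel(v)` (resp. `oddlevel(v)`) path is an `evenlevel(b)` path concatenated
with an `evenlevel(b; v)` (resp. `oddlevel(b; v)`) path, where `b = base(v)`. -/
theorem stmt6 (G : SimpleGraph V) (M : G.Subgraph) (hM : M.IsMatching)
    (v b : V) (t : ℕ∞) (ht : tenacity G M v = t) (hlt : t < lm G M)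
    (hbase : IsBase G M v b) :
    ∀ (f : V) (w : G.Walk f v), IsMinPathTo G M v f w →
      ∃ hbw : b ∈ w.support,
        ((w.takeUntil b hbw).length : ℕ∞) = evenlevel G M b ∧
        (Even w.length → ((w.dropUntil b hbw).length : ℕ∞) = evenlevelFrom G M b v) ∧
        (Odd w.length → ((w.dropUntil b hbw).length : ℕ∞) = oddlevelFrom G M b v) := by

  intro f w hmin
  have htfin : tenacity G M v ≠ ⊤ := by
    rw [ht]
    exact ne_top_of_lt hlt
  have hefin : evenlevel G M v ≠ ⊤ := by
    intro h
    exact htfin (by rw [tenacity, h, top_add])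
  have hofin : oddlevel G M v ≠ ⊤ := by
    intro h
    exact htfin (by rw [tenacity, h, add_top])
  obtain ⟨e, he'⟩ := WithTop.ne_top_iff_exists.mp hefin
  obtain ⟨o, ho'⟩ := WithTop.ne_top_iff_exists.mp hofin
  have he : evenlevel G M v = (e : ℕ∞) := he'.symm
  have ho : oddlevel G M v = (o : ℕ∞) := ho'.symm
  have hee : Even e := by
    obtain ⟨_, _, _, _, _, hev, hlen⟩ := evenlevel_witness he
    exact hlen ▸ hev
  have hoo : Odd o := by
    obtain ⟨_, _, _, _, _, hod, hlen⟩ := oddlevel_witness ho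
    exact hlen ▸ hod
  have hlm' : ((e + o : ℕ) : ℕ∞) < lm G M := by
    have h1 : tenacity G M v = ((e + o : ℕ) : ℕ∞) := by
      rw [tenacity, he, ho]; push_cast; ring
    rw [← h1, ht]
    exact hlt
  obtain ⟨Λ, hΛev, hevb, hFe, hFo, hΛe, hΛo, hall⟩ := main_core hM hbase he ho hee hoo hlm'
  obtain ⟨hbw, -, -⟩ := hbase f w hmin
  have hsplit := length_split w hbw
  have hpre := hall f w hmin hbw
  refine ⟨hbw, ?_, ?_, ?_⟩
  · rw [hpre, hevb]
  · intro hev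
    have hle : w.length = e := by
      rcases hmin.2.2.2 with ⟨_, hl⟩ | ⟨hod, _⟩
      · rw [he] at hl; exact_mod_cast hl
      · exact absurd hod (Nat.not_odd_iff_even.mpr hev)
    rw [hFe]
    have : (w.dropUntil b hbw).length = e - Λ := by omega
    rw [this]
  · intro hod
    have hle : w.length = o := by
      rcases hmin.2.2.2 with ⟨hev, _⟩ | ⟨_, hl⟩
      · exact absurd hod (Nat.not_odd_iff_even.mpr hev)
      · rw [ho] at hl; exact_mod_cast hl
    rw [hFo]
    have : (w.dropUntil b hbw).length = o - Λ := by omega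
    rw [this]

end MV
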